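/- For the comb hierarchy over elementary types, n_E := (...((E_1 → E_2) → E_3)...) → E_n, a binary string b of appropriate length lies in the index set D_n (characterizing Δ_{n_E} = ⊕_{b ∈ D_n} L_b) if and only if b, read from the right, starts with an even number of 1s. Moreover λ_n = d_{E_n}^{-1} ∏_{i=1}^{(n−1)/2} d_{E_{2i−1}}^{-1} for n odd, and λ_n = ∏_{i=1}^{n/2} d_{E_{2i}}^{-1} for n even. -/

import Mathlib

/-- The all-ones string of length `k`. -/
def allOnes (k : ℕ) : List Bool := List.replicate k true

/-- The length of the maximal run of `1`s at the right end of a string. -/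
def trailingOnes (l : List Bool) : ℕ := (l.reverse.takeWhile id).length

/-- The index set `D_n` of the comb hierarchy over elementary types
`n_E = (...((E_1 → E_2) → E_3)...) → E_n`, defined via the recursion
`D_* = {0}`, `D_{x→y} = W_x D_y ∪ D̄_x D_y^⊥` (here `y` elementary). -/
def Dchain : ℕ → Set (List Bool)
  | 0 => ∅
  | 1 => {[false]}
  | n + 2 =>
      {l | ∃ w : List Bool, w.length = n + 1 ∧ l = w ++ [false]} ∪
      {l | ∃ w : List Bool, w.length = n + 1 ∧ w ≠ allOnes (n + 1) ∧
        w ∉ Dchain (n + 1) ∧ l = w ++ [true]}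

/-- The normalization constant `λ_n` of the elementary comb `n_E`, for dimensions
`d 1, ..., d n`: `λ_1 = 1/d_1`, `λ_{n+1} = λ_{E_{n+1}} / (d_{1⋯n} λ_n)`. -/
noncomputable def lamChain (d : ℕ → ℕ) : ℕ → ℝ
  | 0 => 1
  | 1 => 1 / (d 1)
  | n + 2 =>
      (1 / (d (n + 2))) /
        ((∏ i ∈ Finset.range (n + 1), (d (i + 1) : ℝ)) * lamChain d (n + 1))

/-- Characterization of elementary combs: a binary string `b` lies in `D_n` iff,
read from the right, it starts with an even number of `1`s (i.e. the maximal
trailing run of `1`s has even length and is not the whole string); and the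
normalization constant is `λ_n = d_n⁻¹ ∏ d_{2i-1}⁻¹` for `n` odd and
`λ_n = ∏ d_{2i}⁻¹` for `n` even. -/
lemma trailingOnes_append_false (w : List Bool) : trailingOnes (w ++ [false]) = 0 := by
  simp [trailingOnes]

lemma trailingOnes_append_true (w : List Bool) :
    trailingOnes (w ++ [true]) = trailingOnes w + 1 := by
  simp [trailingOnes]

lemma trailingOnes_le (l : List Bool) : trailingOnes l ≤ l.length := by
  simpa [trailingOnes] using l.reverse.takeWhile_prefix id |>.length_le

lemma trailingOnes_allOnes (k : ℕ) : trailingOnes (allOnes k) = k := by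
  simp [trailingOnes, allOnes]

lemma trailingOnes_eq_length_iff (l : List Bool) :
    trailingOnes l = l.length ↔ l = allOnes l.length := by
  constructor
  · intro h
    have hpre : l.reverse.takeWhile id <+: l.reverse := List.takeWhile_prefix id
    have heq : l.reverse.takeWhile id = l.reverse :=
      hpre.eq_of_length (by simpa [trailingOnes] using h)
    have hall : ∀ a ∈ l, a = true := by
      intro a ha
      have := List.mem_takeWhile_imp (p := id) (l := l.reverse) (x := a)
        (by rw [heq]; simpa using ha)
      simpa using this
    exact List.eq_replicate_iff.mpr ⟨rfl, hall⟩
  · intro h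
    rw [h, allOnes]; simpa [allOnes] using trailingOnes_allOnes l.length

lemma Dchain_iff : ∀ n, 1 ≤ n → ∀ l : List Bool,
    l ∈ Dchain n ↔ (l.length = n ∧ Even (trailingOnes l) ∧ trailingOnes l < n) := by
  intro n
  induction n using Nat.strong_induction_on with
  | _ n ih =>
    match n with
    | 0 => intro h; omega
    | 1 =>
      intro _ l
      constructor
      · intro hl
        have hl' : l = [false] := hl
        subst hl'
        refine ⟨rfl, ⟨0, rfl⟩, by simp [trailingOnes]⟩
      · rintro ⟨hlen, he, hlt⟩
        obtain ⟨a, rfl⟩ := List.length_eq_one_iff.mp hlen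
        cases a
        · show _ ∈ ({[false]} : Set (List Bool)); rfl
        · simp [trailingOnes] at hlt
    | n + 2 =>
      intro _ l
      have IH := ih (n + 1) (by omega) (by omega)
      constructor
      · rintro (⟨w, hw, rfl⟩ | ⟨w, hw, hne, hnd, rfl⟩)
        · exact ⟨by simp [hw], by simp [trailingOnes_append_false], by
            simp [trailingOnes_append_false]⟩
        · have hle : trailingOnes w ≤ n + 1 := hw ▸ trailingOnes_le w
          have hto : trailingOnes w ≠ n + 1 := by
            intro h
            apply hne
            have := (trailingOnes_eq_length_iff w).mp (by rw [hw]; exact h)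
            rwa [hw] at this
          have hodd : ¬ Even (trailingOnes w) := by
            intro hE
            exact hnd ((IH w).mpr ⟨hw, hE, by omega⟩)
          refine ⟨by simp [hw], ?_, ?_⟩
          · rw [trailingOnes_append_true]
            exact (Nat.not_even_iff_odd.mp hodd).add_one
          · rw [trailingOnes_append_true]; omega
      · rintro ⟨hlen, he, hlt⟩
        rcases List.eq_nil_or_concat l with rfl | ⟨w, b, rfl⟩
        · simp at hlen
        · simp only [List.concat_eq_append] at *
          have hw : w.length = n + 1 := by simpa using hlen
          cases b
          · exact Or.inl ⟨w, hw, rfl⟩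
          · rw [trailingOnes_append_true] at he hlt
            have hodd : ¬ Even (trailingOnes w) := by
              rw [Nat.even_add_one] at he; exact he
            refine Or.inr ⟨w, hw, ?_, ?_, rfl⟩
            · intro hall
              have := trailingOnes_allOnes (n + 1)
              rw [← hall] at this
              omega
            · rw [IH]; rintro ⟨-, hE, -⟩; exact hodd hE

lemma prod_range_two_mul (f : ℕ → ℝ) (k : ℕ) :
    ∏ i ∈ Finset.range (2 * k), f i =
      (∏ i ∈ Finset.range k, f (2 * i)) * ∏ i ∈ Finset.range k, f (2 * i + 1) := by
  induction k with
  | zero => simp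
  | succ k ih =>
    rw [show 2 * (k + 1) = 2 * k + 1 + 1 by ring, Finset.prod_range_succ,
      Finset.prod_range_succ, ih, Finset.prod_range_succ, Finset.prod_range_succ]
    ring

lemma lam_formula (d : ℕ → ℕ) (hd : ∀ i, 0 < d i) : ∀ n, 1 ≤ n →
    (Odd n → lamChain d n =
      (d n : ℝ)⁻¹ * ∏ i ∈ Finset.range ((n - 1) / 2), (d (2 * i + 1) : ℝ)⁻¹) ∧
    (Even n → lamChain d n = ∏ i ∈ Finset.range (n / 2), (d (2 * i + 2) : ℝ)⁻¹) := by
  have hd' : ∀ i, (d i : ℝ) ≠ 0 := fun i => Nat.cast_ne_zero.mpr (hd i).ne'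
  intro n
  induction n using Nat.strong_induction_on with
  | _ n ih =>
    match n with
    | 0 => intro h; omega
    | 1 =>
      intro _
      constructor
      · intro _
        show 1 / (d 1 : ℝ) = _
        simp [one_div]
      · intro h; exact absurd h (by simp [Nat.even_iff])
    | n + 2 =>
      intro _
      have IH := ih (n + 1) (by omega) (by omega)
      rcases Nat.even_or_odd n with hn | hn
      · -- n even, n = 2k, n+2 even
        obtain ⟨k, hk⟩ := hn
        have hk2 : n = 2 * k := by omega
        subst hk2
        have hlam1 : lamChain d (2 * k + 1) =
            (d (2 * k + 1) : ℝ)⁻¹ * ∏ i ∈ Finset.range k, (d (2 * i + 1) : ℝ)⁻¹ := by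
          have := IH.1 (by exact ⟨k, by omega⟩)
          simpa using this
        have hP : ∏ i ∈ Finset.range (2 * k + 1), (d (i + 1) : ℝ) =
            ((∏ i ∈ Finset.range k, (d (2 * i + 1) : ℝ)) *
              ∏ i ∈ Finset.range k, (d (2 * i + 2) : ℝ)) * (d (2 * k + 1) : ℝ) := by
          rw [Finset.prod_range_succ, prod_range_two_mul (fun i => (d (i + 1) : ℝ)) k]
        constructor
        · intro h
          rw [Nat.odd_iff] at h; omega
        · intro _
          have hA : (∏ i ∈ Finset.range k, (d (2 * i + 1) : ℝ)) ≠ 0 :=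
            Finset.prod_ne_zero_iff.mpr fun i _ => hd' _
          have hB : (∏ i ∈ Finset.range k, (d (2 * i + 2) : ℝ)) ≠ 0 :=
            Finset.prod_ne_zero_iff.mpr fun i _ => hd' _
          show (1 / (d (2 * k + 2) : ℝ)) / _ = _
          rw [hP, hlam1, show (2 * k + 2) / 2 = k + 1 by omega, Finset.prod_range_succ,
            Finset.prod_inv_distrib, Finset.prod_inv_distrib]
          have key : ((∏ i ∈ Finset.range k, (d (2 * i + 1) : ℝ)) *
                (∏ i ∈ Finset.range k, (d (2 * i + 2) : ℝ)) * (d (2 * k + 1) : ℝ)) *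
                ((d (2 * k + 1) : ℝ)⁻¹ * (∏ i ∈ Finset.range k, (d (2 * i + 1) : ℝ))⁻¹) =
              ∏ i ∈ Finset.range k, (d (2 * i + 2) : ℝ) := by
            have h2 : ((∏ i ∈ Finset.range k, (d (2 * i + 1) : ℝ)) *
                (∏ i ∈ Finset.range k, (d (2 * i + 2) : ℝ)) * (d (2 * k + 1) : ℝ)) *
                ((d (2 * k + 1) : ℝ)⁻¹ * (∏ i ∈ Finset.range k, (d (2 * i + 1) : ℝ))⁻¹) =
                ((d (2 * k + 1) : ℝ) * (d (2 * k + 1) : ℝ)⁻¹) *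
                (((∏ i ∈ Finset.range k, (d (2 * i + 1) : ℝ)) *
                  (∏ i ∈ Finset.range k, (d (2 * i + 1) : ℝ))⁻¹) *
                  ∏ i ∈ Finset.range k, (d (2 * i + 2) : ℝ)) := by ring
            rw [h2, mul_inv_cancel₀ (hd' _), mul_inv_cancel₀ hA, one_mul, one_mul]
          rw [key]
          field_simp
      · -- n odd, n = 2k+1
        obtain ⟨k, hk⟩ := hn
        subst hk
        have hlam1 : lamChain d (2 * k + 1 + 1) =
            ∏ i ∈ Finset.range (k + 1), (d (2 * i + 2) : ℝ)⁻¹ := by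
          have := IH.2 (by exact ⟨k + 1, by omega⟩)
          simpa [show (2 * k + 1 + 1) / 2 = k + 1 by omega] using this
        have hP : ∏ i ∈ Finset.range (2 * k + 1 + 1), (d (i + 1) : ℝ) =
            (∏ i ∈ Finset.range (k + 1), (d (2 * i + 1) : ℝ)) *
              ∏ i ∈ Finset.range (k + 1), (d (2 * i + 2) : ℝ) := by
          rw [show 2 * k + 1 + 1 = 2 * (k + 1) by ring,
            prod_range_two_mul (fun i => (d (i + 1) : ℝ)) (k + 1)]
        constructor
        · intro _
          have hA : (∏ i ∈ Finset.range (k + 1), (d (2 * i + 1) : ℝ)) ≠ 0 :=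
            Finset.prod_ne_zero_iff.mpr fun i _ => hd' _
          have hB : (∏ i ∈ Finset.range (k + 1), (d (2 * i + 2) : ℝ)) ≠ 0 :=
            Finset.prod_ne_zero_iff.mpr fun i _ => hd' _
          show (1 / (d (2 * k + 1 + 2) : ℝ)) / _ = _
          rw [hP, hlam1, show (2 * k + 1 + 2 - 1) / 2 = k + 1 by omega,
            Finset.prod_inv_distrib]
          have key : ((∏ i ∈ Finset.range (k + 1), (d (2 * i + 1) : ℝ)) *
                (∏ i ∈ Finset.range (k + 1), (d (2 * i + 2) : ℝ))) *
                (∏ i ∈ Finset.range (k + 1), (d (2 * i + 2) : ℝ))⁻¹ =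
              ∏ i ∈ Finset.range (k + 1), (d (2 * i + 1) : ℝ) := by
            rw [mul_assoc, mul_inv_cancel₀ hB, mul_one]
          rw [key]
          field_simp
          simp only [one_div, Finset.prod_inv_distrib]
          rw [mul_inv_cancel₀ hA, one_div]
        · intro h
          rw [Nat.even_iff] at h; omega

theorem chain_comb_characterization (d : ℕ → ℕ) (hd : ∀ i, 0 < d i)
    (n : ℕ) (hn : 1 ≤ n) :
    (∀ l : List Bool, l ∈ Dchain n ↔
      (l.length = n ∧ Even (trailingOnes l) ∧ trailingOnes l < n)) ∧
    (Odd n → lamChain d n =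
      (d n : ℝ)⁻¹ * ∏ i ∈ Finset.range ((n - 1) / 2), (d (2 * i + 1) : ℝ)⁻¹) ∧
    (Even n → lamChain d n = ∏ i ∈ Finset.range (n / 2), (d (2 * i + 2) : ℝ)⁻¹) := by
  exact ⟨Dchain_iff n hn, (lam_formula d hd n hn).1, (lam_formula d hd n hn).2⟩
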